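/- (Admissibility of the HGN landmark heuristic.) Let L be a finite set of facts such that every φ ∈ L is a landmark of the relaxed HGN planning problem (s₀, gn₀) and φ ∉ s₀, set ach(φ) = {a : φ ∈ add(a)}, and let (x, c) be a cost partition for (L, ach, cost). Then for every relevance relation rel and every plan π ∈ S(s₀, gn₀), Σ_{φ∈L} c(φ) ≤ cost(π). In particular, Σ_{φ∈L} c(φ) is a lower bound on the cost of a hierarchically optimal solution, i.e., on min{cost(π) : π ∈ S(s₀, gn₀)} whenever S(s₀, gn₀) is nonempty. -/

import Mathlib

open scoped Classical

/-- An action: precondition, add effects, delete effects, and a nonnegative cost. -/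
structure PAction (F : Type*) where
  pre : Set F
  add : Set F
  del : Set F
  cost : NNReal

variable {F : Type*}

/-- The state resulting from applying action `a` in state `s`: `(s \ del a) ∪ add a`. -/
def applyAction (s : Set F) (a : PAction F) : Set F := (s \ a.del) ∪ a.add

/-- A plan is executable from `s` if each action's precondition holds in the state
produced by the previous actions. -/
def Exec : Set F → List (PAction F) → Prop
  | _, [] => True
  | s, a :: rest => a.pre ⊆ s ∧ Exec (applyAction s a) rest

/-- The state obtained by running a plan from `s`. -/
def runPlan : Set F → List (PAction F) → Set F
  | s, [] => s
  | s, a :: rest => runPlan (applyAction s a) rest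

/-- The `i`-th intermediate state `σᵢ` of a plan `π` started in `s`
(the result of executing the first `i` actions). -/
def stateAt (s : Set F) (π : List (PAction F)) (i : ℕ) : Set F := runPlan s (π.take i)

/-- The cost of a plan: the sum of the costs of its actions (with multiplicity). -/
def planCost (π : List (PAction F)) : NNReal := (π.map PAction.cost).sum

/-- A plan solves the classical planning problem `(s₀, g)` (with `g` a set of states)
if it is executable from `s₀` and its final state lies in `g`. -/
def Solves (s₀ : Set F) (g : Set (Set F)) (π : List (PAction F)) : Prop :=
  Exec s₀ π ∧ stateAt s₀ π π.length ∈ g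

/-- A fact `φ` is a landmark of the problem `(s₀, g)` if every solution plan has `φ`
in some intermediate state. -/
def IsLandmark (s₀ : Set F) (g : Set (Set F)) (φ : F) : Prop :=
  ∀ π, Solves s₀ g π → ∃ i ≤ π.length, φ ∈ stateAt s₀ π i

/-- A goal network: a finite set `T` of nodes, an order relation `prec` on the nodes,
and a goal (a set of states) attached to each node. -/
structure GoalNetwork (F : Type*) (ν : Type*) where
  T : Finset ν
  prec : ν → ν → Prop
  goal : ν → Set (Set F)

variable {ν : Type*}

/-- `prec` is a strict partial order on the nodes of the network. -/
def GoalNetwork.IsStrictOrder (gn : GoalNetwork F ν) : Prop :=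
  (∀ t ∈ gn.T, ¬ gn.prec t t) ∧
    (∀ t ∈ gn.T, ∀ u ∈ gn.T, ∀ v ∈ gn.T, gn.prec t u → gn.prec u v → gn.prec t v)

/-- A node is unconstrained if it has no `≺`-predecessor in the network. -/
def Unconstrained (gn : GoalNetwork F ν) (t : ν) : Prop := ∀ u ∈ gn.T, ¬ gn.prec u t

/-- A plan `π` solves the relaxed HGN planning problem `(s₀, gn)` if it is executable from
`s₀` and there is `τ : T → {0,…,n}` with `σ_{τ t} ∈ goal t` for all `t ∈ T` and
`τ t ≤ τ u` whenever `t ≺ u`. -/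
def SolvesRelaxed (s₀ : Set F) (gn : GoalNetwork F ν) (π : List (PAction F)) : Prop :=
  Exec s₀ π ∧ ∃ τ : ν → ℕ,
    (∀ t ∈ gn.T, τ t ≤ π.length ∧ stateAt s₀ π (τ t) ∈ gn.goal t) ∧
    (∀ t ∈ gn.T, ∀ u ∈ gn.T, gn.prec t u → τ t ≤ τ u)

/-- A fact `φ` is a landmark of the relaxed HGN problem `(s₀, gn)` if every plan solving it
has `φ` in some intermediate state. -/
def IsRelaxedLandmark (s₀ : Set F) (gn : GoalNetwork F ν) (φ : F) : Prop :=
  ∀ π, SolvesRelaxed s₀ gn π → ∃ i ≤ π.length, φ ∈ stateAt s₀ π i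

/-- An HGN method: a precondition and a goal network with a distinguished 'last' node `tg`
that is maximal in the network's order. -/
structure Method (F : Type*) (ν : Type*) where
  precond : Set F
  network : GoalNetwork F ν
  tg : ν
  tg_mem : tg ∈ network.T
  tg_max : ∀ u ∈ network.T, ¬ network.prec tg u

/-- Method application `gn ∘ₜ m` (for node sets taken disjoint): the node set is the union of
the two node sets, the order contains both orders together with `tg ≺ t`, and goals are
inherited (from `network m` on its nodes, from `gn` elsewhere). -/
noncomputable def GoalNetwork.applyMethod (gn : GoalNetwork F ν) (t : ν) (m : Method F ν) :
    GoalNetwork F ν where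
  T := gn.T ∪ m.network.T
  prec := fun a b => gn.prec a b ∨ m.network.prec a b ∨ (a = m.tg ∧ b = t)
  goal := fun a => if a ∈ m.network.T then m.network.goal a else gn.goal a

/-- Goal release `gn − t`: remove node `t` and all orderings involving it. -/
noncomputable def GoalNetwork.release (gn : GoalNetwork F ν) (t : ν) : GoalNetwork F ν where
  T := gn.T.erase t
  prec := fun a b => gn.prec a b ∧ a ≠ t ∧ b ≠ t
  goal := gn.goal

/-- The HGN solution set `S(s₀, gn)` (Definition of solutions to HGN planning problems),
relative to relevance relations `relA` (actions) and `relM` (methods). -/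
inductive HGNSol (relA : PAction F → Set (Set F) → Prop)
    (relM : Method F ν → Set (Set F) → Prop) :
    Set F → GoalNetwork F ν → List (PAction F) → Prop
  | base (s : Set F) (gn : GoalNetwork F ν) : gn.T = ∅ → HGNSol relA relM s gn []
  | satisfied (s : Set F) (gn : GoalNetwork F ν) (t : ν) (π : List (PAction F)) :
      t ∈ gn.T → Unconstrained gn t → s ∈ gn.goal t →
      HGNSol relA relM s (gn.release t) π → HGNSol relA relM s gn π
  | action (s : Set F) (gn : GoalNetwork F ν) (t : ν) (a : PAction F) (π : List (PAction F)) :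
      t ∈ gn.T → Unconstrained gn t → a.pre ⊆ s → relA a (gn.goal t) →
      HGNSol relA relM (applyAction s a) gn π → HGNSol relA relM s gn (a :: π)
  | method (s : Set F) (gn : GoalNetwork F ν) (t : ν) (m : Method F ν) (π : List (PAction F)) :
      t ∈ gn.T → Unconstrained gn t → m.precond ⊆ s → relM m (gn.goal t) →
      Disjoint gn.T m.network.T →
      HGNSol relA relM s (gn.applyMethod t m) π → HGNSol relA relM s gn π

lemma HGNSol_solvesRelaxed {relA : PAction F → Set (Set F) → Prop}
    {relM : Method F ν → Set (Set F) → Prop} {s : Set F} {gn : GoalNetwork F ν}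
    {π : List (PAction F)} (h : HGNSol relA relM s gn π) : SolvesRelaxed s gn π := by
  induction h with
  | base s gn hT =>
      exact ⟨trivial, fun _ => 0, by simp [hT], by simp [hT]⟩
  | satisfied s gn t π ht hunc hgoal _ ih =>
      obtain ⟨hexec, τ, h1, h2⟩ := ih
      refine ⟨hexec, fun u => if u = t then 0 else τ u, ?_, ?_⟩
      · intro u hu
        by_cases hut : u = t
        · subst hut; simp [stateAt, runPlan, hgoal]
        · simp only [if_neg hut]
          exact h1 u (Finset.mem_erase.mpr ⟨hut, hu⟩)
      · intro u hu v hv hprec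
        by_cases hvt : v = t
        · exact absurd (hvt ▸ hprec) (hunc u hu)
        · by_cases hut : u = t
          · simp [hut, hvt]
          · simp only [if_neg hut, if_neg hvt]
            exact h2 u (Finset.mem_erase.mpr ⟨hut, hu⟩) v (Finset.mem_erase.mpr ⟨hvt, hv⟩)
              ⟨hprec, hut, hvt⟩
  | action s gn t a π ht hunc hpre hrel _ ih =>
      obtain ⟨hexec, τ, h1, h2⟩ := ih
      refine ⟨⟨hpre, hexec⟩, fun u => τ u + 1, ?_, fun u hu v hv hp =>
        Nat.add_le_add_right (h2 u hu v hv hp) 1⟩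
      intro u hu
      obtain ⟨hlen, hgoal⟩ := h1 u hu
      refine ⟨by simp; omega, ?_⟩
      have heq : stateAt s (a :: π) (τ u + 1) = stateAt (applyAction s a) π (τ u) := by
        simp [stateAt, runPlan, List.take]
      rw [heq]; exact hgoal
  | method s gn t m π ht hunc hpre hrel hdisj _ ih =>
      obtain ⟨hexec, τ, h1, h2⟩ := ih
      refine ⟨hexec, τ, ?_, ?_⟩
      · intro u hu
        have hu' : u ∈ (gn.applyMethod t m).T := Finset.mem_union_left _ hu
        have hnm : u ∉ m.network.T := fun hmem => Finset.disjoint_left.mp hdisj hu hmem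
        have := h1 u hu'
        simpa [GoalNetwork.applyMethod, hnm] using this
      · intro u hu v hv hp
        exact h2 u (Finset.mem_union_left _ hu) v (Finset.mem_union_left _ hv) (Or.inl hp)

lemma exists_achiever {s : Set F} {π : List (PAction F)} {φ : F}
    (h : φ ∈ runPlan s π) (hφ : φ ∉ s) : ∃ a ∈ π, φ ∈ a.add := by
  induction π generalizing s with
  | nil => exact absurd h hφ
  | cons a rest ih =>
      by_cases hadd : φ ∈ a.add
      · exact ⟨a, List.mem_cons_self, hadd⟩
      · have hφ' : φ ∉ applyAction s a := by
          intro hmem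
          rcases hmem with ⟨hs, _⟩ | h2
          · exact hφ hs
          · exact hadd h2
        obtain ⟨b, hb, h3⟩ := ih h hφ'
        exact ⟨b, List.mem_cons_of_mem a hb, h3⟩

lemma sum_c_le_planCost (L0 : Finset F) (x : PAction F → F → NNReal) (c : F → NNReal)
    (hx : ∀ a : PAction F, ∑ φ ∈ L0.filter (fun φ => φ ∈ a.add), x a φ ≤ a.cost)
    (hc : ∀ φ ∈ L0, ∀ a : PAction F, φ ∈ a.add → c φ ≤ x a φ) :
    ∀ (π : List (PAction F)) (L : Finset F), L ⊆ L0 →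
      (∀ φ ∈ L, ∃ a ∈ π, φ ∈ a.add) → ∑ φ ∈ L, c φ ≤ planCost π := by
  intro π
  induction π with
  | nil =>
      intro L _ h
      have hLe : L = ∅ := Finset.eq_empty_of_forall_notMem fun φ hφ => by
        obtain ⟨a, ha, _⟩ := h φ hφ; simp at ha
      simp [hLe, planCost]
  | cons a rest ih =>
      intro L hL h
      have hsplit : ∑ φ ∈ L, c φ =
          ∑ φ ∈ L.filter (fun φ => φ ∈ a.add), c φ +
          ∑ φ ∈ L.filter (fun φ => ¬ φ ∈ a.add), c φ :=
        (Finset.sum_filter_add_sum_filter_not L _ c).symm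
      have h1 : ∑ φ ∈ L.filter (fun φ => φ ∈ a.add), c φ ≤ a.cost := by
        calc ∑ φ ∈ L.filter (fun φ => φ ∈ a.add), c φ
            ≤ ∑ φ ∈ L.filter (fun φ => φ ∈ a.add), x a φ :=
              Finset.sum_le_sum fun φ hφ => hc φ (hL (Finset.mem_of_mem_filter φ hφ))
                a (Finset.mem_filter.mp hφ).2
          _ ≤ ∑ φ ∈ L0.filter (fun φ => φ ∈ a.add), x a φ :=
              Finset.sum_le_sum_of_subset (Finset.filter_subset_filter _ hL)
          _ ≤ a.cost := hx a
      have h2 : ∑ φ ∈ L.filter (fun φ => ¬ φ ∈ a.add), c φ ≤ planCost rest := by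
        apply ih _ ((Finset.filter_subset _ _).trans hL)
        intro φ hφ
        obtain ⟨b, hb, hbadd⟩ := h φ (Finset.mem_of_mem_filter φ hφ)
        rcases List.mem_cons.mp hb with rfl | hb'
        · exact absurd hbadd (Finset.mem_filter.mp hφ).2
        · exact ⟨b, hb', hbadd⟩
      have hcost : planCost (a :: rest) = a.cost + planCost rest := by simp [planCost]
      rw [hsplit, hcost]
      exact add_le_add h1 h2

/-- Admissibility of the HGN landmark heuristic: given landmarks `L` of the relaxed HGN
problem not holding initially, achievers `ach φ = {a | φ ∈ add a}` and a cost partition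
`(x, c)`, the value `Σ_{φ∈L} c φ` is a lower bound on the cost of every HGN solution (for
any relevance relations), hence on the cost of a hierarchically optimal solution. -/
theorem hHL_admissible (s₀ : Set F) (gn₀ : GoalNetwork F ν)
    (hstrict : gn₀.IsStrictOrder) (L : Finset F)
    (hL : ∀ φ ∈ L, IsRelaxedLandmark s₀ gn₀ φ ∧ φ ∉ s₀)
    (x : PAction F → F → NNReal) (c : F → NNReal)
    (hx : ∀ a : PAction F, ∑ φ ∈ L.filter (fun φ => φ ∈ a.add), x a φ ≤ a.cost)
    (hc : ∀ φ ∈ L, ∀ a : PAction F, φ ∈ a.add → c φ ≤ x a φ)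
    (relA : PAction F → Set (Set F) → Prop) (relM : Method F ν → Set (Set F) → Prop) :
    (∀ π : List (PAction F), HGNSol relA relM s₀ gn₀ π → ∑ φ ∈ L, c φ ≤ planCost π) ∧
    ((∃ π : List (PAction F), HGNSol relA relM s₀ gn₀ π) →
      ∑ φ ∈ L, c φ ≤ sInf {r : NNReal | ∃ π, HGNSol relA relM s₀ gn₀ π ∧ planCost π = r}) := by
  have part1 : ∀ π : List (PAction F), HGNSol relA relM s₀ gn₀ π →
      ∑ φ ∈ L, c φ ≤ planCost π := by
    intro π hπ
    apply sum_c_le_planCost L x c hx hc π L (Finset.Subset.refl _)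
    intro φ hφ
    obtain ⟨hlm, hns⟩ := hL φ hφ
    obtain ⟨i, hi, hmem⟩ := hlm π (HGNSol_solvesRelaxed hπ)
    obtain ⟨a, ha, hadd⟩ := exists_achiever (s := s₀) (π := π.take i) hmem hns
    exact ⟨a, List.mem_of_mem_take ha, hadd⟩
  refine ⟨part1, ?_⟩
  rintro ⟨π, hπ⟩
  exact le_csInf ⟨planCost π, π, hπ, rfl⟩ (by rintro r ⟨π', hπ', rfl⟩; exact part1 π' hπ')
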